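/- Let Y₁ be an affine algebraic variety over ℂ with an action of a reductive group G, Y₂ an affine variety, and g: Y₁ → Y₂ a G-invariant morphism, inducing f: Y₁//G → Y₂ from the GIT quotient and the quotient map g': Y₁ → Y₁//G. Suppose z' ∈ Y₁//G and z ∈ Y₂ satisfy f(z') = z, and the inclusion of fibers (g')⁻¹(z') ⊆ g⁻¹(z) is an equality. Then the scheme-theoretic fiber f⁻¹(z) is a point (a reduced single point). -/

import Mathlib

/-- The subalgebra of `G`-invariant functions `A^G = ℂ[Y₁]^G`. -/
def invariantSubalgebra (G A : Type*) [Monoid G] [CommRing A] [Algebra ℂ A]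
    [MulSemiringAction G A] [SMulCommClass G ℂ A] : Subalgebra ℂ A where
  carrier := {a | ∀ g : G, g • a = a}
  mul_mem' := fun ha hb g => by rw [smul_mul', ha g, hb g]
  one_mem' := fun g => smul_one g
  add_mem' := fun ha hb g => by rw [smul_add, ha g, hb g]
  zero_mem' := fun g => smul_zero g
  algebraMap_mem' := fun c g => by
    rw [Algebra.algebraMap_eq_smul_one, smul_comm g c (1 : A), smul_one]


/-- Nullstellensatz: a maximal ideal of a finite-type `ℂ`-algebra is the kernel of a
`ℂ`-point. -/
lemma exists_point_of_maximal (A : Type*) [CommRing A] [Algebra ℂ A] (M : Ideal A)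
    [M.IsMaximal] (hfg : Algebra.FiniteType ℂ A) : ∃ x : A →ₐ[ℂ] ℂ, ∀ a ∈ M, x a = 0 := by
  letI : Field (A ⧸ M) := Ideal.Quotient.field M
  haveI : Algebra.FiniteType ℂ (A ⧸ M) := @Algebra.FiniteType.of_surjective _ _ _ _ _ _ _ _ hfg
    (Ideal.Quotient.mkₐ ℂ M) (Ideal.Quotient.mkₐ_surjective ℂ M)
  haveI : Module.Finite ℂ (A ⧸ M) := finite_of_finite_type_of_isJacobsonRing ℂ (A ⧸ M)
  haveI : Algebra.IsIntegral ℂ (A ⧸ M) := Algebra.IsIntegral.of_finite ℂ (A ⧸ M)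
  have hsurj : Function.Surjective (algebraMap ℂ (A ⧸ M)) :=
    IsAlgClosed.algebraMap_bijective_of_isIntegral.2
  have hbij : Function.Bijective (Algebra.ofId ℂ (A ⧸ M)) :=
    ⟨(algebraMap ℂ (A ⧸ M)).injective, hsurj⟩
  let e := AlgEquiv.ofBijective (Algebra.ofId ℂ (A ⧸ M)) hbij
  refine ⟨(e.symm.toAlgHom).comp (Ideal.Quotient.mkₐ ℂ M), fun a ha => ?_⟩
  simp [Ideal.Quotient.eq_zero_iff_mem.mpr ha]

/-!
STATEMENT 16 (uniqueness of the point of a GIT quotient over a separated fiber).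
Let `Y₁ = Spec A` be an affine variety with an action of a reductive group `G`
(reductivity encoded by a Reynolds operator `Rey : A → A^G`), `Y₂ = Spec B`
affine, `g : Y₁ → Y₂` a `G`-invariant map (the `ℂ`-algebra map `φ : B → A`
lands in the invariants `A^G`), inducing `f : Y₁//G = Spec A^G → Y₂` and the
quotient map `g' : Y₁ → Y₁//G`.  Points of an affine variety are its `ℂ`-algebra
maps to `ℂ`: `z : B →ₐ ℂ` is a point of `Y₂`, `z'` of `Y₁//G`, with
`f(z') = z` (`hcompat`).  The hypothesis `hfib` says the inclusion
`(g')⁻¹(z') ⊆ g⁻¹(z)` is an equality: every point `x` of `Y₁` with `g(x) = z`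
satisfies `g'(x) = z'`.  The conclusion is that `f⁻¹(z)` is a point: `z'` is
the only point of `Y₁//G` mapping to `z` under `f`.
-/
theorem git_fiber_is_a_point
    (G A B : Type*) [Group G] [CommRing A] [Algebra ℂ A] [CommRing B] [Algebra ℂ B]
    [MulSemiringAction G A] [SMulCommClass G ℂ A]
    (hfg : Algebra.FiniteType ℂ A)
    (Rey : A →ₗ[ℂ] A)
    (hRey_mem : ∀ a : A, Rey a ∈ invariantSubalgebra G A)
    (hRey_id : ∀ a ∈ invariantSubalgebra G A, Rey a = a)
    (hRey_lin : ∀ s ∈ invariantSubalgebra G A, ∀ a : A, Rey (s * a) = s * Rey a)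
    (φ : B →ₐ[ℂ] A) (hφ : ∀ b : B, φ b ∈ invariantSubalgebra G A)
    (z : B →ₐ[ℂ] ℂ) (z' : ↥(invariantSubalgebra G A) →ₐ[ℂ] ℂ)
    (hcompat : ∀ b : B, z b = z' ⟨φ b, hφ b⟩)
    (hfib : ∀ x : A →ₐ[ℂ] ℂ, x.comp φ = z →
      ∀ a : ↥(invariantSubalgebra G A), x a = z' a) :
    ∀ w : ↥(invariantSubalgebra G A) →ₐ[ℂ] ℂ,
      (∀ b : B, w ⟨φ b, hφ b⟩ = z b) → w = z' := by
  intro w hw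
  classical
  -- the ideal of A generated by ker w
  let I : Ideal A := Ideal.span (Subtype.val '' {s : ↥(invariantSubalgebra G A) | w s = 0})
  -- the Reynolds-averaged evaluation
  let ψ : A → ℂ := fun a => w ⟨Rey a, hRey_mem a⟩
  have ψ_congr : ∀ (u v : A) (h : u = v), ψ u = ψ v := fun u v h => by rw [h]
  have key : ∀ x ∈ I, ∀ a : A, ψ (a * x) = 0 := by
    intro x hx
    refine Submodule.span_induction ?_ ?_ ?_ ?_ hx
    · rintro _ ⟨s, hs, rfl⟩ a
      have h1 : ψ (a * (s : A)) = w (s * ⟨Rey a, hRey_mem a⟩) := by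
        show w ⟨Rey (a * (s : A)), _⟩ = _
        congr 1
        exact Subtype.ext (by
          show Rey (a * (s : A)) = (s : A) * Rey a
          rw [mul_comm a (s : A)]
          exact hRey_lin _ s.2 a)
      rw [h1, map_mul, hs, zero_mul]
    · intro a
      have h1 : ψ (a * 0) = w 0 := by
        show w ⟨Rey (a * 0), _⟩ = w 0
        congr 1
        exact Subtype.ext (by show Rey (a * 0) = 0; rw [mul_zero, map_zero])
      rw [h1, map_zero]
    · intro x y _ _ hxa hya a
      have h1 : ψ (a * (x + y)) = w (⟨Rey (a * x), hRey_mem _⟩ + ⟨Rey (a * y), hRey_mem _⟩) := by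
        show w ⟨Rey (a * (x + y)), _⟩ = _
        congr 1
        exact Subtype.ext (by
          show Rey (a * (x + y)) = Rey (a * x) + Rey (a * y)
          rw [mul_add, map_add])
      rw [h1, map_add]
      show ψ (a * x) + ψ (a * y) = 0
      rw [hxa a, hya a, add_zero]
    · intro c x _ hxa a
      have h1 : a * (c • x) = (a * c) * x := by rw [smul_eq_mul]; ring
      rw [ψ_congr _ _ h1]
      exact hxa (a * c)
  -- I is a proper ideal
  have hIne : I ≠ ⊤ := by
    intro htop
    have h1 : (1 : A) ∈ I := htop ▸ Submodule.mem_top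
    have h2 := key 1 h1 1
    have h3 : ψ (1 * 1) = w 1 := by
      show w ⟨Rey (1 * 1), _⟩ = w 1
      congr 1
      exact Subtype.ext (by show Rey (1 * 1) = 1; rw [one_mul]; exact hRey_id 1 (one_mem _))
    rw [h3, map_one] at h2
    exact one_ne_zero h2
  obtain ⟨M, hM, hIM⟩ := Ideal.exists_le_maximal I hIne
  obtain ⟨x, hx⟩ := @exists_point_of_maximal A _ _ M hM hfg
  -- x restricted to the invariants is w
  have hxw : ∀ s : ↥(invariantSubalgebra G A), x (s : A) = w s := by
    intro s
    have hmem : ((s - algebraMap ℂ (invariantSubalgebra G A) (w s) : _) : A) ∈ I := by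
      apply Ideal.subset_span
      exact ⟨s - algebraMap ℂ _ (w s), by simp, rfl⟩
    have h0 := hx _ (hIM hmem)
    have hval : ((s - algebraMap ℂ (invariantSubalgebra G A) (w s) : _) : A)
        = (s : A) - algebraMap ℂ A (w s) := by
      push_cast
      rfl
    rw [hval, map_sub, AlgHom.commutes, sub_eq_zero] at h0
    simpa using h0
  -- x lies over z
  have hxz : x.comp φ = z := by
    ext b
    have h1 := hxw ⟨φ b, hφ b⟩
    simp only [AlgHom.coe_comp, Function.comp_apply]
    rw [show x (φ b) = x ((⟨φ b, hφ b⟩ : invariantSubalgebra G A) : A) from rfl, h1, hw b]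
  -- conclude via hfib
  ext s
  rw [← hfib x hxz s, ← hxw s]
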